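/- Let ((X_t)_{t≥0}, (L^t_1,…,L^t_n)_{t≥0}) be an instance of an n-dimensional GLexRSM for a stopping time T, and fix 1 ≤ k ≤ n and s, M ∈ ℕ. Define D = {ω ∈ Ω | X_s[k](ω) ≤ M and ω ∈ ∪_{j=k}^n L^s_j}, the stopping time F(ω) = inf{t ≥ s | ω ∉ ∪_{j'=k}^n L^t_{j'}}, and the process (Y_t)_{t≥0} by: Y_t(ω) = 0 if ω ∉ D; Y_t(ω) = M if ω ∈ D and t < s; Y_t(ω) = X_t[k](ω) if ω ∈ D, t ≥ s and F(ω) > t; and Y_t(ω) = X_{F(ω)}[k](ω) otherwise. Then for each t ≥ s it holds that E[Y_{t+1}] ≤ E[Y_t] − P[L^t_k ∩ D ∩ {F > t}]. -/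

import Mathlib

open MeasureTheory Set
open scoped Classical
open scoped ENNReal

/-- An instance of an `n`-dimensional generalized lexicographic ranking supermartingale
(GLexRSM) for a stopping time `T` (with values in `ℕ∞`): the process `X` together with the
`ℱ t`-measurable sets `L t j` partitioning `{T > t}`, satisfying measurability/integrability,
the lexicographic expected decrease conditions, partial non-negativity, and expected leftward
non-negativity. -/
def IsGLexRSMInstance {Ω : Type*} {m : MeasurableSpace Ω} (μ : Measure Ω)
    (ℱ : Filtration ℕ m) (T : Ω → ℕ∞) {n : ℕ}
    (X : ℕ → Fin n → Ω → ℝ) (L : ℕ → Fin n → Set Ω) : Prop :=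
  -- the sets `L t j` partition `{T > t}`
  (∀ t : ℕ, (⋃ j, L t j) = {ω | (t : ℕ∞) < T ω}) ∧
  (∀ t : ℕ, ∀ j j' : Fin n, j ≠ j' → Disjoint (L t j) (L t j')) ∧
  (∀ t : ℕ, ∀ j : Fin n, MeasurableSet[ℱ t] (L t j)) ∧
  -- (1) each `X t j` is `ℱ t`-measurable
  (∀ t : ℕ, ∀ j : Fin n, StronglyMeasurable[ℱ t] (X t j)) ∧
  -- (2) the relevant conditional expectations exist: each `X t j` is integrable
  (∀ t : ℕ, ∀ j : Fin n, Integrable (X t j) μ) ∧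
  -- (3a) expected non-increase on `⋃_{j' ≥ j} L t j'`
  (∀ t : ℕ, ∀ j : Fin n, ∀ ω ∈ ⋃ j' ≥ j, L t j',
      (μ[X (t + 1) j | ℱ t]) ω ≤ X t j ω) ∧
  -- (3b) expected decrease by 1 on `L t j`
  (∀ t : ℕ, ∀ j : Fin n, ∀ ω ∈ L t j,
      (μ[X (t + 1) j | ℱ t]) ω ≤ X t j ω - 1) ∧
  -- (3c) non-negativity on `⋃_{j' ≥ j} L t j'`
  (∀ t : ℕ, ∀ j : Fin n, ∀ ω ∈ ⋃ j' ≥ j, L t j', 0 ≤ X t j ω) ∧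
  -- (3d) expected leftward non-negativity, where `L (t+1) 0 = {T ≤ t+1}`
  (∀ t : ℕ, ∀ j : Fin n, ∀ ω ∈ ⋃ j' ≥ j, L t j',
      0 ≤ (μ[Set.indicator
              ({ω' | T ω' ≤ ((t + 1 : ℕ) : ℕ∞)} ∪ ⋃ j' < j, L (t + 1) j')
              (X (t + 1) j) | ℱ t]) ω)

/-- For a GLexRSM instance, with `D = {X s k ≤ M} ∩ ⋃_{j ≥ k} L s j`,
`F ω = inf {t ≥ s | ω ∉ ⋃_{j' ≥ k} L t j'}`, and the auxiliary process `Y`,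
for each `t ≥ s` we have `E[Y (t+1)] ≤ E[Y t] − P[L t k ∩ D ∩ {F > t}]`. -/
theorem glexrsm_aux_process_expectation_decrease
    {Ω : Type*} {m : MeasurableSpace Ω} (μ : Measure Ω) [IsProbabilityMeasure μ]
    (ℱ : Filtration ℕ m) (T : Ω → ℕ∞)
    (hT : ∀ t : ℕ, MeasurableSet[ℱ t] {ω | T ω ≤ (t : ℕ∞)})
    {n : ℕ} (X : ℕ → Fin n → Ω → ℝ) (L : ℕ → Fin n → Set Ω)
    (hinst : IsGLexRSMInstance μ ℱ T X L)
    (k : Fin n) (s M : ℕ)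
    (D : Set Ω) (hD : D = {ω | X s k ω ≤ (M : ℝ) ∧ ω ∈ ⋃ j ≥ k, L s j})
    (F : Ω → ℕ∞)
    (hF : ∀ ω, F ω = sInf {u : ℕ∞ | ∃ r : ℕ, u = (r : ℕ∞) ∧ s ≤ r ∧ ω ∉ ⋃ j' ≥ k, L r j'})
    (Y : ℕ → Ω → ℝ)
    (hY : ∀ t ω, Y t ω =
      if ω ∈ D then
        (if t < s then (M : ℝ)
         else if (t : ℕ∞) < F ω then X t k ω
         else X (F ω).toNat k ω)
      else 0)
    (hYint : ∀ t, Integrable (Y t) μ) :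
    ∀ t : ℕ, s ≤ t →
      ∫ ω, Y (t + 1) ω ∂μ ≤
        ∫ ω, Y t ω ∂μ - (μ (L t k ∩ D ∩ {ω | (t : ℕ∞) < F ω})).toReal := by
  obtain ⟨hpart, hdisj, hLmeas, hXmeas, hXint, h3a, h3b, h3c, h3d⟩ := hinst
  intro t hst
  set B : ℕ → Set Ω := fun r => ⋃ j' ≥ k, L r j' with hB
  have hBmeas : ∀ r, MeasurableSet[ℱ r] (B r) :=
    fun r => MeasurableSet.biUnion (Set.to_countable _) fun j _ => hLmeas r j
  have hFmem : ∀ ω r, s ≤ r → r ≤ t → (t : ℕ∞) < F ω → ω ∈ B r := by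
    intro ω r hsr hrt hFt
    by_contra hmem
    have h1 : F ω ≤ (r : ℕ∞) := by
      rw [hF]; exact sInf_le ⟨r, rfl, hsr, hmem⟩
    have h2 : (t : ℕ∞) < (r : ℕ∞) := lt_of_lt_of_le hFt h1
    exact absurd (Nat.cast_le.mpr hrt) (not_le.mpr h2)
  have hFset : {ω | (t : ℕ∞) < F ω} = ⋂ r ∈ Set.Icc s t, B r := by
    ext ω
    constructor
    · intro h
      exact Set.mem_iInter₂.mpr fun r hr => hFmem ω r hr.1 hr.2 h
    · intro h
      rw [Set.mem_iInter₂] at h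
      have h1 : ((t + 1 : ℕ) : ℕ∞) ≤ F ω := by
        rw [hF]
        refine le_sInf ?_
        rintro u ⟨r, rfl, hsr, hnot⟩
        have hrt : t < r := by
          by_contra hle
          exact hnot (h r ⟨hsr, not_lt.mp hle⟩)
        exact_mod_cast hrt
      calc (t : ℕ∞) < ((t + 1 : ℕ) : ℕ∞) := by exact_mod_cast Nat.lt_succ_self t
        _ ≤ F ω := h1
  set A : Set Ω := D ∩ {ω | (t : ℕ∞) < F ω} with hA
  have hDmeasF : MeasurableSet[ℱ t] D := by
    have hDeq : D = (X s k ⁻¹' Set.Iic (M : ℝ)) ∩ B s := by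
      rw [hD]; rfl
    rw [hDeq]
    exact (ℱ.mono hst _ ((hXmeas s k).measurable measurableSet_Iic)).inter
      (ℱ.mono hst _ (hBmeas s))
  have hAmeasF : MeasurableSet[ℱ t] A := by
    refine hDmeasF.inter ?_
    rw [hFset]
    exact MeasurableSet.biInter (Set.to_countable _)
      fun r hr => ℱ.mono hr.2 _ (hBmeas r)
  have hAmeas : MeasurableSet A := ℱ.le t _ hAmeasF
  have hAB : A ⊆ B t := fun ω hω => hFmem ω t hst le_rfl hω.2
  -- pointwise difference
  have hdiff : ∀ ω, Y (t + 1) ω - Y t ω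
      = A.indicator (fun ω => X (t + 1) k ω - X t k ω) ω := by
    intro ω
    by_cases hDω : ω ∈ D
    · by_cases hFω : (t : ℕ∞) < F ω
      · have hωA : ω ∈ A := ⟨hDω, hFω⟩
        have hYt : Y t ω = X t k ω := by
          rw [hY, if_pos hDω, if_neg (Nat.not_lt.mpr hst), if_pos hFω]
        have hYt1 : Y (t + 1) ω = X (t + 1) k ω := by
          rw [hY, if_pos hDω, if_neg (Nat.not_lt.mpr (Nat.le_succ_of_le hst))]
          by_cases h2 : ((t + 1 : ℕ) : ℕ∞) < F ω
          · rw [if_pos h2]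
          · have hle : F ω ≤ ((t + 1 : ℕ) : ℕ∞) := not_lt.mp h2
            have hge : ((t + 1 : ℕ) : ℕ∞) ≤ F ω := by
              have := Order.add_one_le_of_lt hFω
              rw [show ((t + 1 : ℕ) : ℕ∞) = (t : ℕ∞) + 1 by push_cast; ring]
              exact this
            have hFeq : F ω = ((t + 1 : ℕ) : ℕ∞) := le_antisymm hle hge
            rw [if_neg h2, hFeq, ENat.toNat_coe]
        rw [hYt, hYt1, Set.indicator_of_mem hωA]
      · have hωA : ω ∉ A := fun h => hFω h.2
        have hle : F ω ≤ (t : ℕ∞) := not_lt.mp hFω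
        have hFω1 : ¬ ((t + 1 : ℕ) : ℕ∞) < F ω := by
          refine not_lt.mpr (le_trans hle ?_)
          exact_mod_cast Nat.le_succ t
        have hYt : Y t ω = X (F ω).toNat k ω := by
          rw [hY, if_pos hDω, if_neg (Nat.not_lt.mpr hst), if_neg hFω]
        have hYt1 : Y (t + 1) ω = X (F ω).toNat k ω := by
          rw [hY, if_pos hDω, if_neg (Nat.not_lt.mpr (Nat.le_succ_of_le hst)), if_neg hFω1]
        rw [hYt, hYt1, Set.indicator_of_notMem hωA, sub_self]
    · have hωA : ω ∉ A := fun h => hDω h.1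
      rw [hY, hY, if_neg hDω, if_neg hDω, Set.indicator_of_notMem hωA, sub_self]
  set g : Ω → ℝ := μ[X (t + 1) k | ℱ t] with hg
  have hgint : Integrable g μ := integrable_condExp
  have hAL : L t k ∩ D ∩ {ω | (t : ℕ∞) < F ω} = A ∩ L t k := by
    rw [hA]; ext ω; constructor
    · rintro ⟨⟨h1, h2⟩, h3⟩; exact ⟨⟨h2, h3⟩, h1⟩
    · rintro ⟨⟨h2, h3⟩, h1⟩; exact ⟨⟨h1, h2⟩, h3⟩
  have hALmeas : MeasurableSet (A ∩ L t k) := hAmeas.inter (ℱ.le t _ (hLmeas t k))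
  have hADmeas : MeasurableSet (A \ L t k) := hAmeas.diff (ℱ.le t _ (hLmeas t k))
  -- the key inequality on A
  have hkey : ∫ ω in A, g ω ∂μ ≤ ∫ ω in A, X t k ω ∂μ - (μ (A ∩ L t k)).toReal := by
    have hsplit : A = (A ∩ L t k) ∪ (A \ L t k) := (Set.inter_union_diff A (L t k)).symm
    have hdisj' : Disjoint (A ∩ L t k) (A \ L t k) :=
      Set.disjoint_of_subset_left Set.inter_subset_right disjoint_sdiff_right
    have e1 : ∫ ω in A, g ω ∂μ
        = ∫ ω in A ∩ L t k, g ω ∂μ + ∫ ω in A \ L t k, g ω ∂μ := by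
      conv_lhs => rw [hsplit]
      exact setIntegral_union hdisj' hADmeas hgint.integrableOn hgint.integrableOn
    have e2 : ∫ ω in A, X t k ω ∂μ
        = ∫ ω in A ∩ L t k, X t k ω ∂μ + ∫ ω in A \ L t k, X t k ω ∂μ := by
      conv_lhs => rw [hsplit]
      exact setIntegral_union hdisj' hADmeas (hXint t k).integrableOn (hXint t k).integrableOn
    have i1 : ∫ ω in A ∩ L t k, g ω ∂μ
        ≤ ∫ ω in A ∩ L t k, (X t k ω - 1) ∂μ := by
      refine setIntegral_mono_on hgint.integrableOn
        (((hXint t k).sub (integrable_const 1)).integrableOn) hALmeas ?_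
      intro ω hω
      exact h3b t k ω hω.2
    have i1' : ∫ ω in A ∩ L t k, (X t k ω - 1) ∂μ
        = ∫ ω in A ∩ L t k, X t k ω ∂μ - (μ (A ∩ L t k)).toReal := by
      rw [integral_sub (hXint t k).integrableOn (integrable_const 1).integrableOn]
      simp [Measure.restrict_apply_univ]
      rfl
    have i2 : ∫ ω in A \ L t k, g ω ∂μ ≤ ∫ ω in A \ L t k, X t k ω ∂μ := by
      refine setIntegral_mono_on hgint.integrableOn (hXint t k).integrableOn hADmeas ?_
      intro ω hω
      exact h3a t k ω (hAB hω.1)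
    rw [e1, e2]
    rw [i1'] at i1
    linarith
  have hcond : ∫ ω in A, X (t + 1) k ω ∂μ = ∫ ω in A, g ω ∂μ :=
    (setIntegral_condExp (ℱ.le t) (hXint (t + 1) k) hAmeasF).symm
  have hmain : ∫ ω, Y (t + 1) ω ∂μ - ∫ ω, Y t ω ∂μ
      = ∫ ω in A, X (t + 1) k ω ∂μ - ∫ ω in A, X t k ω ∂μ := by
    rw [← integral_sub (hYint (t + 1)) (hYint t)]
    rw [show (fun ω => Y (t + 1) ω - Y t ω)
        = A.indicator (fun ω => X (t + 1) k ω - X t k ω) from funext hdiff]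
    rw [integral_indicator hAmeas]
    exact integral_sub (hXint (t + 1) k).integrableOn (hXint t k).integrableOn
  rw [hAL]
  rw [hcond] at hmain
  linarith
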